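/- Let (Σ_A, σ) be a topologically mixing subshift of finite type on the alphabet {1,…,N} with N ≥ 2 given by a 0-1 transition matrix A, and let φ : Σ_A → ℝ be Hölder continuous. Let A' be the (N−1)×(N−1) matrix obtained from A by deleting the first row and column, and Σ' ⊂ Σ_A the associated subshift (assumed nonempty and transitive). Then the topological pressure satisfies P_top(φ, Σ') < P_top(φ, Σ_A), i.e. removing a symbol creates a strict pressure gap. -/

import Mathlib

open Filter
open scoped Classical

/-- The two-sided subshift of finite type determined by a 0-1 transition matrix `M`. -/
def SFT {N : ℕ} (M : Fin N → Fin N → Bool) : Set (ℤ → Fin N) :=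
  {x | ∀ n : ℤ, M (x n) (x (n + 1)) = true}

/-- The (left) shift map on bi-infinite sequences. -/
def shift {N : ℕ} (x : ℤ → Fin N) : ℤ → Fin N := fun n => x (n + 1)

/-- Partition function of the potential `φ` on the subsystem `Y`:
sum over admissible words of length `n` of `exp(sup of Birkhoff sums over the cylinder)`. -/
noncomputable def partitionFn {N : ℕ} (φ : (ℤ → Fin N) → ℝ) (Y : Set (ℤ → Fin N))
    (n : ℕ) : ℝ :=
  ∑ w : Fin n → Fin N,
    if ({x ∈ Y | ∀ i : Fin n, x (i : ℕ) = w i}).Nonempty then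
      Real.exp (sSup ((fun x => ∑ k ∈ Finset.range n, φ (shift^[k] x)) ''
        {x ∈ Y | ∀ i : Fin n, x (i : ℕ) = w i}))
    else 0

/-- Topological pressure of `φ` on the subsystem `Y`. -/
noncomputable def pressure {N : ℕ} (φ : (ℤ → Fin N) → ℝ) (Y : Set (ℤ → Fin N)) : ℝ :=
  limsup (fun n : ℕ => Real.log (partitionFn φ Y n) / n) atTop

open Topology

namespace PGap

variable {N : ℕ}

/-- Birkhoff sum. -/
noncomputable def birk (φ : (ℤ → Fin N) → ℝ) (n : ℕ) (x : ℤ → Fin N) : ℝ :=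
  ∑ k ∈ Finset.range n, φ (shift^[k] x)

/-- Cylinder set. -/
def cylSet (Y : Set (ℤ → Fin N)) {n : ℕ} (w : Fin n → Fin N) : Set (ℤ → Fin N) :=
  {x ∈ Y | ∀ i : Fin n, x (i : ℕ) = w i}

/-- Weight of a word. -/
noncomputable def wt (φ : (ℤ → Fin N) → ℝ) (Y : Set (ℤ → Fin N)) {n : ℕ}
    (w : Fin n → Fin N) : ℝ :=
  if (cylSet Y w).Nonempty then Real.exp (sSup (birk φ n '' cylSet Y w)) else 0

lemma partitionFn_eq (φ : (ℤ → Fin N) → ℝ) (Y : Set (ℤ → Fin N)) (n : ℕ) :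
    partitionFn φ Y n = ∑ w : Fin n → Fin N, wt φ Y w := rfl

lemma shift_iterate (k : ℕ) (x : ℤ → Fin N) (n : ℤ) : (shift^[k] x) n = x (n + k) := by
  induction k generalizing n with
  | zero => simp
  | succ k ih =>
    rw [Function.iterate_succ', Function.comp_apply]
    show (shift^[k] x) (n + 1) = _
    rw [ih]
    congr 1
    push_cast
    ring

lemma SFT_shift {M : Fin N → Fin N → Bool} {x : ℤ → Fin N} (hx : x ∈ SFT M) :
    shift x ∈ SFT M := fun n => hx (n + 1)

lemma SFT_shift_iterate {M : Fin N → Fin N → Bool} {x : ℤ → Fin N} (hx : x ∈ SFT M) (k : ℕ) :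
    shift^[k] x ∈ SFT M := by
  induction k with
  | zero => exact hx
  | succ k ih => rw [Function.iterate_succ', Function.comp_apply]; exact SFT_shift ih

lemma birk_add (φ : (ℤ → Fin N) → ℝ) (a b : ℕ) (x : ℤ → Fin N) :
    birk φ (a + b) x = birk φ a x + birk φ b (shift^[a] x) := by
  unfold birk
  rw [Finset.sum_range_add]
  congr 1
  refine Finset.sum_congr rfl fun k _ => ?_
  congr 1
  rw [← Function.iterate_add_apply]
  congr 1
  omega


section Bounds

variable {M : Fin N → Fin N → Bool} {φ : (ℤ → Fin N) → ℝ} {B : ℝ}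

lemma birk_abs_le (hB : ∀ x ∈ SFT M, |φ x| ≤ B) {x : ℤ → Fin N} (hx : x ∈ SFT M) (n : ℕ) :
    |birk φ n x| ≤ n * B := by
  calc |birk φ n x| ≤ ∑ k ∈ Finset.range n, |φ (shift^[k] x)| :=
        Finset.abs_sum_le_sum_abs _ _
    _ ≤ ∑ _k ∈ Finset.range n, B :=
        Finset.sum_le_sum fun k _ => hB _ (SFT_shift_iterate hx k)
    _ = n * B := by simp [mul_comm]

lemma cylSet_mono {Y Y' : Set (ℤ → Fin N)} (h : Y ⊆ Y') {n : ℕ} (w : Fin n → Fin N) :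
    cylSet Y w ⊆ cylSet Y' w := fun x hx => ⟨h hx.1, hx.2⟩

lemma bddAbove_birk_image (hB : ∀ x ∈ SFT M, |φ x| ≤ B) {Y : Set (ℤ → Fin N)}
    (hY : Y ⊆ SFT M) {n : ℕ} (w : Fin n → Fin N) :
    BddAbove (birk φ n '' cylSet Y w) := by
  refine ⟨n * B, ?_⟩
  rintro s ⟨x, hx, rfl⟩
  have := birk_abs_le hB (hY hx.1) n
  rw [abs_le] at this
  exact this.2

lemma wt_nonneg (φ : (ℤ → Fin N) → ℝ) (Y : Set (ℤ → Fin N)) {n : ℕ} (w : Fin n → Fin N) :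
    0 ≤ wt φ Y w := by
  unfold wt; split
  · exact (Real.exp_pos _).le
  · exact le_refl 0

lemma wt_le_exp (hB : ∀ x ∈ SFT M, |φ x| ≤ B) {Y : Set (ℤ → Fin N)} (hY : Y ⊆ SFT M)
    {n : ℕ} (w : Fin n → Fin N) (hB0 : 0 ≤ B) : wt φ Y w ≤ Real.exp (n * B) := by
  unfold wt; split
  · rename_i h
    apply Real.exp_le_exp.2
    refine Real.sSup_le ?_ (by positivity)
    rintro s ⟨x, hx, rfl⟩
    have := birk_abs_le hB (hY hx.1) n
    rw [abs_le] at this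
    exact this.2
  · exact (Real.exp_pos _).le

lemma exp_birk_le_wt (hB : ∀ x ∈ SFT M, |φ x| ≤ B) {Y : Set (ℤ → Fin N)} (hY : Y ⊆ SFT M)
    {n : ℕ} {w : Fin n → Fin N} {x : ℤ → Fin N} (hx : x ∈ cylSet Y w) :
    Real.exp (birk φ n x) ≤ wt φ Y w := by
  unfold wt
  rw [if_pos ⟨x, hx⟩]
  exact Real.exp_le_exp.2 (le_csSup (bddAbove_birk_image hB hY w) ⟨x, hx, rfl⟩)

lemma exp_le_wt (hB : ∀ x ∈ SFT M, |φ x| ≤ B) {Y : Set (ℤ → Fin N)} (hY : Y ⊆ SFT M)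
    {n : ℕ} {w : Fin n → Fin N} (hne : (cylSet Y w).Nonempty) :
    Real.exp (-(n * B)) ≤ wt φ Y w := by
  obtain ⟨x, hx⟩ := hne
  refine le_trans ?_ (exp_birk_le_wt hB hY hx)
  apply Real.exp_le_exp.2
  have := birk_abs_le hB (hY hx.1) n
  rw [abs_le] at this
  linarith [this.1]

lemma wt_mono (hB : ∀ x ∈ SFT M, |φ x| ≤ B) {Y Y' : Set (ℤ → Fin N)} (hY' : Y' ⊆ SFT M)
    (hYY' : Y ⊆ Y') {n : ℕ} (w : Fin n → Fin N) : wt φ Y w ≤ wt φ Y' w := by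
  unfold wt
  split
  · rename_i h
    rw [if_pos (h.mono (cylSet_mono hYY' w))]
    apply Real.exp_le_exp.2
    exact csSup_le_csSup (bddAbove_birk_image hB hY' w) (h.image _)
      (Set.image_mono (cylSet_mono hYY' w))
  · exact wt_nonneg φ Y' w

lemma partitionFn_nonneg (φ : (ℤ → Fin N) → ℝ) (Y : Set (ℤ → Fin N)) (n : ℕ) :
    0 ≤ partitionFn φ Y n := by
  rw [partitionFn_eq]
  exact Finset.sum_nonneg fun w _ => wt_nonneg φ Y w

lemma partitionFn_pos (φ : (ℤ → Fin N) → ℝ) {Y : Set (ℤ → Fin N)} (hne : Y.Nonempty)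
    (n : ℕ) : 0 < partitionFn φ Y n := by
  obtain ⟨x, hx⟩ := hne
  rw [partitionFn_eq]
  apply Finset.sum_pos' (fun w _ => wt_nonneg φ Y w)
  refine ⟨fun i => x (i : ℕ), Finset.mem_univ _, ?_⟩
  unfold wt
  rw [if_pos ⟨x, hx, fun i => rfl⟩]
  exact Real.exp_pos _

end Bounds

section Geom

variable {θ C : ℝ}

lemma geo_le (hθ0 : 0 ≤ θ) (hθ1 : θ < 1) (T : ℕ) :
    ∑ i ∈ Finset.range T, θ ^ i ≤ (1 - θ)⁻¹ := by
  rw [geom_sum_eq (by linarith : θ ≠ 1), div_le_iff_of_neg (by linarith : θ - 1 < 0)]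
  have h : (1 - θ)⁻¹ * (θ - 1) = -1 := by
    rw [inv_mul_eq_div, div_eq_iff (by linarith : (1:ℝ) - θ ≠ 0)]
    ring
  rw [h]
  nlinarith [pow_nonneg hθ0 T]

lemma sum_pow_le (hθ0 : 0 ≤ θ) (hθ1 : θ < 1) (s : Finset ℕ) (e : ℕ → ℕ)
    (he : ∀ x ∈ s, ∀ y ∈ s, e x = e y → x = y) :
    ∑ k ∈ s, θ ^ e k ≤ (1 - θ)⁻¹ := by
  have h2 : ∑ t ∈ s.image e, θ ^ t = ∑ k ∈ s, θ ^ e k :=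
    Finset.sum_image (f := fun t => θ ^ t) he
  rw [← h2]
  calc ∑ t ∈ s.image e, θ ^ t
      ≤ ∑ t ∈ Finset.range ((s.image e).sup id + 1), θ ^ t := by
        apply Finset.sum_le_sum_of_subset_of_nonneg
        · intro t ht
          exact Finset.mem_range.2 (Nat.lt_succ_of_le (Finset.le_sup (f := id) ht))
        · intro t _ _
          exact pow_nonneg hθ0 t
    _ ≤ (1 - θ)⁻¹ := geo_le hθ0 hθ1 _

end Geom

section Holder

variable {M : Fin N → Fin N → Bool} {φ : (ℤ → Fin N) → ℝ} {C θ : ℝ}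

/-- Master Hölder estimate: if `x` and `y` agree on the integer interval `[L, U]` and the
summation zone `[a, b)` lies inside `[L, U]`, the Birkhoff sums over the zone are close. -/
lemma birk_zone (hC : 0 < C) (hθ0 : 0 < θ) (hθ1 : θ < 1)
    (hH : ∀ n : ℕ, ∀ x ∈ SFT M, ∀ y ∈ SFT M, (∀ i : ℤ, |i| ≤ (n : ℤ) → x i = y i) →
      |φ x - φ y| ≤ C * θ ^ n)
    {x y : ℤ → Fin N} (hx : x ∈ SFT M) (hy : y ∈ SFT M) (L U : ℤ)
    (hagree : ∀ i : ℤ, L ≤ i → i ≤ U → x i = y i) (a b : ℕ)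
    (hab : ∀ k : ℕ, a ≤ k → k < b → L ≤ (k : ℤ) ∧ (k : ℤ) ≤ U) :
    |∑ k ∈ Finset.Ico a b, (φ (shift^[k] x) - φ (shift^[k] y))| ≤ 2 * (C * (1 - θ)⁻¹) := by
  rcases le_or_gt b a with hba | hba
  · rw [Finset.Ico_eq_empty (by omega), Finset.sum_empty, abs_zero]
    have : 0 < (1 - θ)⁻¹ := by
      apply inv_pos.2; linarith
    positivity
  have key : ∀ k ∈ Finset.Ico a b, |φ (shift^[k] x) - φ (shift^[k] y)| ≤
      C * θ ^ ((k : ℤ) - L).toNat + C * θ ^ (U - (k : ℤ)).toNat := by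
    intro k hk
    rw [Finset.mem_Ico] at hk
    obtain ⟨hL, hU⟩ := hab k hk.1 hk.2
    set n1 := min ((k : ℤ) - L).toNat (U - (k : ℤ)).toNat with hn1
    have e1 : n1 ≤ ((k : ℤ) - L).toNat := min_le_left _ _
    have e2 : n1 ≤ (U - (k : ℤ)).toNat := min_le_right _ _
    have h1 : |φ (shift^[k] x) - φ (shift^[k] y)| ≤ C * θ ^ n1 := by
      apply hH n1 _ (SFT_shift_iterate hx k) _ (SFT_shift_iterate hy k)
      intro i hi
      rw [shift_iterate, shift_iterate]
      rw [abs_le] at hi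
      apply hagree <;> omega
    have hnn1 : 0 ≤ C * θ ^ ((k : ℤ) - L).toNat := by positivity
    have hnn2 : 0 ≤ C * θ ^ (U - (k : ℤ)).toNat := by positivity
    rcases le_total (((k : ℤ) - L).toNat) ((U - (k : ℤ)).toNat) with h | h
    · have : n1 = ((k : ℤ) - L).toNat := min_eq_left h
      rw [this] at h1
      linarith
    · have : n1 = (U - (k : ℤ)).toNat := min_eq_right h
      rw [this] at h1
      linarith
  calc |∑ k ∈ Finset.Ico a b, (φ (shift^[k] x) - φ (shift^[k] y))|
      ≤ ∑ k ∈ Finset.Ico a b, |φ (shift^[k] x) - φ (shift^[k] y)| :=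
        Finset.abs_sum_le_sum_abs _ _
    _ ≤ ∑ k ∈ Finset.Ico a b, (C * θ ^ ((k : ℤ) - L).toNat + C * θ ^ (U - (k : ℤ)).toNat) :=
        Finset.sum_le_sum key
    _ = C * (∑ k ∈ Finset.Ico a b, θ ^ ((k : ℤ) - L).toNat) +
        C * (∑ k ∈ Finset.Ico a b, θ ^ (U - (k : ℤ)).toNat) := by
        rw [Finset.sum_add_distrib, Finset.mul_sum, Finset.mul_sum]
    _ ≤ C * (1 - θ)⁻¹ + C * (1 - θ)⁻¹ := by
        have i1 : ∑ k ∈ Finset.Ico a b, θ ^ ((k : ℤ) - L).toNat ≤ (1 - θ)⁻¹ := by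
          apply sum_pow_le hθ0.le hθ1
          intro p hp q hq hpq
          rw [Finset.mem_Ico] at hp hq
          have := (hab p hp.1 hp.2).1
          have := (hab q hq.1 hq.2).1
          omega
        have i2 : ∑ k ∈ Finset.Ico a b, θ ^ (U - (k : ℤ)).toNat ≤ (1 - θ)⁻¹ := by
          apply sum_pow_le hθ0.le hθ1
          intro p hp q hq hpq
          rw [Finset.mem_Ico] at hp hq
          have := (hab p hp.1 hp.2).2
          have := (hab q hq.1 hq.2).2
          omega
        have hC' : (0:ℝ) ≤ C := hC.le
        nlinarith
    _ = 2 * (C * (1 - θ)⁻¹) := by ring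

/-- Two points of the SFT whose coordinates agree on `[0, n-1]` have `birk n`-sums
within `2C/(1-θ)` of each other. -/
lemma birk_close (hC : 0 < C) (hθ0 : 0 < θ) (hθ1 : θ < 1)
    (hH : ∀ n : ℕ, ∀ x ∈ SFT M, ∀ y ∈ SFT M, (∀ i : ℤ, |i| ≤ (n : ℤ) → x i = y i) →
      |φ x - φ y| ≤ C * θ ^ n)
    {x y : ℤ → Fin N} (hx : x ∈ SFT M) (hy : y ∈ SFT M) (n : ℕ)
    (hagree : ∀ i : ℤ, 0 ≤ i → i ≤ (n : ℤ) - 1 → x i = y i) :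
    |birk φ n x - birk φ n y| ≤ 2 * (C * (1 - θ)⁻¹) := by
  have h0 : birk φ n x - birk φ n y =
      ∑ k ∈ Finset.Ico 0 n, (φ (shift^[k] x) - φ (shift^[k] y)) := by
    unfold birk
    rw [← Finset.sum_sub_distrib]
    congr 1
    rw [Finset.range_eq_Ico]
  rw [h0]
  exact birk_zone hC hθ0 hθ1 hH hx hy 0 ((n : ℤ) - 1) hagree 0 n
    (fun k hk1 hk2 => by omega)

end Holder

section Extension

variable {M : Fin N → Fin N → Bool}

lemma exists_periodic {p : ℕ} (hp : 1 ≤ p) (cw : ℕ → Fin N)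
    (hcw : ∀ k, k < p → M (cw k) (cw ((k + 1) % p)) = true) :
    ∃ x ∈ SFT M, ∀ k : ℕ, k < p → x (k : ℤ) = cw k := by
  have hp' : (0:ℤ) < (p:ℤ) := by exact_mod_cast hp
  refine ⟨fun i => cw ((i % (p:ℤ)).toNat), ?_, ?_⟩
  · intro i
    have h1 : 0 ≤ i % (p:ℤ) := Int.emod_nonneg i (by omega)
    have h2 : i % (p:ℤ) < p := Int.emod_lt_of_pos i hp'
    set t := (i % (p:ℤ)).toNat with ht
    have htp : t < p := by omega
    have key : (i + 1) % (p:ℤ) = (((t + 1) % p : ℕ) : ℤ) := by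
      have a1 : i + 1 = (i % p + 1) + (p:ℤ) * (i / p) := by
        have := Int.mul_ediv_add_emod i (p:ℤ)
        linarith
      rw [a1, Int.add_mul_emod_self_left]
      have a2 : i % (p:ℤ) + 1 = ((t + 1 : ℕ) : ℤ) := by push_cast; omega
      rw [a2, ← Int.natCast_mod]
    show M (cw ((i % (p:ℤ)).toNat)) (cw (((i + 1) % (p:ℤ)).toNat)) = true
    rw [key]
    simp only [Int.toNat_natCast]
    exact hcw t htp
  · intro k hk
    have : ((k : ℤ)) % (p : ℤ) = (k : ℤ) := Int.emod_eq_of_lt (by omega) (by exact_mod_cast hk)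
    show cw (((k : ℤ) % (p:ℤ)).toNat) = cw k
    rw [this]
    simp

lemma exists_extension {m : ℕ} (hm : 1 ≤ m)
    (hpath : ∀ a b : Fin N, ∃ w : ℕ → Fin N, w 0 = a ∧ w m = b ∧
      ∀ k < m, M (w k) (w (k + 1)) = true)
    {n : ℕ} (hn : 1 ≤ n) (w : Fin n → Fin N)
    (hw : ∀ i j : Fin n, (j : ℕ) = (i : ℕ) + 1 → M (w i) (w j) = true) :
    (cylSet (SFT M) w).Nonempty := by
  obtain ⟨β, hβ0, hβm, hβe⟩ := hpath (w ⟨n - 1, by omega⟩) (w ⟨0, by omega⟩)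
  have hn0 : 0 < n := hn
  set p := n - 1 + m with hp
  have hp1 : 1 ≤ p := by omega
  set cw : ℕ → Fin N :=
    fun k => if k < n then w ⟨k % n, Nat.mod_lt _ hn0⟩ else β (k - (n - 1)) with hcw
  have cw_lt : ∀ k, k < n → cw k = w ⟨k % n, Nat.mod_lt _ hn0⟩ := by
    intro k h; simp only [hcw, if_pos h]
  have cw_ge : ∀ k, ¬ (k < n) → cw k = β (k - (n - 1)) := by
    intro k h; simp only [hcw, if_neg h]
  have hcyc : ∀ k, k < p → M (cw k) (cw ((k + 1) % p)) = true := by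
    intro k hk
    rcases lt_or_ge (k + 1) n with h1 | h1
    · have e1 : cw k = w ⟨k % n, Nat.mod_lt _ hn0⟩ := cw_lt k (by omega)
      have e2 : (k + 1) % p = k + 1 := Nat.mod_eq_of_lt (by omega)
      have e3 : cw ((k + 1) % p) = w ⟨(k + 1) % n, Nat.mod_lt _ hn0⟩ := by
        rw [e2]; exact cw_lt _ h1
      rw [e1, e3]
      apply hw
      simp only [Fin.val_mk]
      rw [Nat.mod_eq_of_lt h1, Nat.mod_eq_of_lt (by omega)]
    · set t := k - (n - 1) with htdef
      have htm : t < m := by omega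
      have e1 : cw k = β t := by
        rcases Nat.lt_or_ge k n with h2 | h2
        · rw [cw_lt k h2]
          have hk1 : t = 0 := by omega
          have hk2 : k % n = n - 1 := by
            rw [Nat.mod_eq_of_lt h2]; omega
          rw [hk1, hβ0]
          congr 1
          exact Fin.ext (by simp [hk2])
        · rw [cw_ge k (by omega)]
      have e2 : cw ((k + 1) % p) = β (t + 1) := by
        rcases Nat.lt_or_ge (k + 1) p with h2 | h2
        · have e : (k + 1) % p = k + 1 := Nat.mod_eq_of_lt h2
          rw [e, cw_ge (k + 1) (by omega)]
          congr 1
          omega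
        · have hkp : k + 1 = p := by omega
          have e : (k + 1) % p = 0 := by rw [hkp, Nat.mod_self]
          rw [e, cw_lt 0 hn0]
          have e' : t + 1 = m := by omega
          rw [e', hβm]
          exact congrArg w (Fin.ext (by simp))
      rw [e1, e2]
      exact hβe t htm
  obtain ⟨x, hxS, hxc⟩ := exists_periodic hp1 cw hcyc
  refine ⟨x, hxS, fun i => ?_⟩
  have h := hxc i (by have := i.isLt; omega : (i : ℕ) < p)
  rw [h, cw_lt _ i.isLt]
  congr 1
  exact Fin.ext (by simp [Nat.mod_eq_of_lt i.isLt])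

lemma path_ge {m : ℕ} (hm : 1 ≤ m)
    (hpath : ∀ a b : Fin N, ∃ w : ℕ → Fin N, w 0 = a ∧ w m = b ∧
      ∀ k < m, M (w k) (w (k + 1)) = true) (d : ℕ) :
    ∀ a b : Fin N, ∃ w : ℕ → Fin N, w 0 = a ∧ w (m + d) = b ∧
      ∀ k < m + d, M (w k) (w (k + 1)) = true := by
  induction d with
  | zero => simpa using hpath
  | succ d ih =>
    intro a b
    obtain ⟨u, hu0, _, hue⟩ := hpath a a
    obtain ⟨v, hv0, hvd, hve⟩ := ih (u 1) b
    refine ⟨fun k => if k = 0 then a else v (k - 1), by simp, ?_, ?_⟩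
    · show (if m + (d + 1) = 0 then a else v (m + (d + 1) - 1)) = b
      rw [if_neg (by omega : ¬ m + (d + 1) = 0)]
      rw [show m + (d + 1) - 1 = m + d by omega, hvd]
    · intro k hk
      rcases Nat.eq_zero_or_pos k with rfl | hk0
      · show M (if (0:ℕ) = 0 then a else v (0 - 1)) (if (0:ℕ) + 1 = 0 then a else v (0 + 1 - 1)) = true
        rw [if_pos rfl, if_neg (by omega : ¬ (0:ℕ) + 1 = 0)]
        have h := hue 0 (by omega)
        rw [hu0] at h
        rw [show (0:ℕ) + 1 - 1 = 0 by rfl, hv0]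
        exact h
      · show M (if k = 0 then a else v (k - 1)) (if k + 1 = 0 then a else v (k + 1 - 1)) = true
        rw [if_neg (by omega : ¬ k = 0), if_neg (by omega : ¬ k + 1 = 0)]
        have h := hve (k - 1) (by omega)
        rw [show k + 1 - 1 = (k - 1) + 1 by omega]
        exact h

lemma exists_B {φ : (ℤ → Fin N) → ℝ} {C θ : ℝ} (hN : 0 < N) (hC : 0 < C)
    (hH : ∀ n : ℕ, ∀ x ∈ SFT M, ∀ y ∈ SFT M, (∀ i : ℤ, |i| ≤ (n : ℤ) → x i = y i) →
      |φ x - φ y| ≤ C * θ ^ n)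
    {m : ℕ} (hm : 1 ≤ m)
    (hpath : ∀ a b : Fin N, ∃ w : ℕ → Fin N, w 0 = a ∧ w m = b ∧
      ∀ k < m, M (w k) (w (k + 1)) = true) :
    ∃ B : ℝ, 0 ≤ B ∧ ∀ x ∈ SFT M, |φ x| ≤ B := by
  have hz : ∀ a : Fin N, ∃ z ∈ SFT M, z 0 = a := by
    intro a
    obtain ⟨x, hx, hxc⟩ := exists_extension hm hpath (n := 1) (by omega) (fun _ => a)
      (by intro i j hij; exfalso; have := i.isLt; have := j.isLt; omega)
    exact ⟨x, hx, by simpa using hxc 0⟩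
  choose z hzS hz0 using hz
  have : Nonempty (Fin N) := ⟨⟨0, hN⟩⟩
  refine ⟨C + Finset.univ.sup' Finset.univ_nonempty (fun a => |φ (z a)|), ?_, ?_⟩
  · have h1 : |φ (z ⟨0, hN⟩)| ≤ Finset.univ.sup' Finset.univ_nonempty (fun a => |φ (z a)|) :=
      Finset.le_sup' (fun a => |φ (z a)|) (Finset.mem_univ _)
    have h2 : (0:ℝ) ≤ |φ (z ⟨0, hN⟩)| := abs_nonneg _
    linarith
  · intro x hx
    have h1 : |φ x - φ (z (x 0))| ≤ C * θ ^ 0 := by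
      apply hH 0 x hx _ (hzS _)
      intro i hi
      rw [abs_le] at hi
      have : i = 0 := by omega
      subst this
      exact (hz0 (x 0)).symm
    have h2 : |φ (z (x 0))| ≤ Finset.univ.sup' Finset.univ_nonempty (fun a => |φ (z a)|) :=
      Finset.le_sup' (fun a => |φ (z a)|) (Finset.mem_univ _)
    have h3 : |φ x| ≤ |φ x - φ (z (x 0))| + |φ (z (x 0))| := by
      calc |φ x| = |(φ x - φ (z (x 0))) + φ (z (x 0))| := by ring_nf
        _ ≤ _ := abs_add_le _ _
    rw [pow_zero, mul_one] at h1
    linarith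

end Extension

section Submult

variable {M : Fin N → Fin N → Bool} {φ : (ℤ → Fin N) → ℝ} {B : ℝ}

def glue {a b : ℕ} (u : Fin a → Fin N) (v : Fin b → Fin N) : Fin (a + b) → Fin N :=
  fun i => Sum.elim u v (finSumFinEquiv.symm i)

lemma glue_left {a b : ℕ} (u : Fin a → Fin N) (v : Fin b → Fin N) (i : Fin a) :
    glue u v (Fin.castAdd b i) = u i := by
  unfold glue
  rw [finSumFinEquiv_symm_apply_castAdd]
  rfl

lemma glue_right {a b : ℕ} (u : Fin a → Fin N) (v : Fin b → Fin N) (j : Fin b) :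
    glue u v (Fin.natAdd a j) = v j := by
  unfold glue
  rw [finSumFinEquiv_symm_apply_natAdd]
  rfl

lemma mem_Y_iter {Y : Set (ℤ → Fin N)} (hsh : ∀ x ∈ Y, shift x ∈ Y) {x : ℤ → Fin N}
    (hx : x ∈ Y) (k : ℕ) : shift^[k] x ∈ Y := by
  induction k with
  | zero => exact hx
  | succ k ih => rw [Function.iterate_succ', Function.comp_apply]; exact hsh _ ih

lemma mem_cyl_glue {Y : Set (ℤ → Fin N)} (hsh : ∀ x ∈ Y, shift x ∈ Y) {a b : ℕ}
    {u : Fin a → Fin N} {v : Fin b → Fin N} {x : ℤ → Fin N}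
    (hx : x ∈ cylSet Y (glue u v)) :
    x ∈ cylSet Y u ∧ shift^[a] x ∈ cylSet Y v := by
  obtain ⟨hxY, hxc⟩ := hx
  refine ⟨⟨hxY, fun i => ?_⟩, ⟨mem_Y_iter hsh hxY a, fun j => ?_⟩⟩
  · have h := hxc (Fin.castAdd b i)
    rw [glue_left] at h
    rwa [Fin.coe_castAdd] at h
  · have h := hxc (Fin.natAdd a j)
    rw [glue_right] at h
    rw [shift_iterate]
    rw [Fin.coe_natAdd] at h
    convert h using 2
    push_cast
    ring

lemma glue_bijective {a b : ℕ} :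
    Function.Bijective (fun p : (Fin a → Fin N) × (Fin b → Fin N) => glue p.1 p.2) := by
  rw [Function.bijective_iff_has_inverse]
  refine ⟨fun w => (fun i => w (Fin.castAdd b i), fun j => w (Fin.natAdd a j)), ?_, ?_⟩
  · rintro ⟨u, v⟩
    refine Prod.ext ?_ ?_
    · funext i
      exact glue_left u v i
    · funext j
      exact glue_right u v j
  · intro w
    funext i
    show Sum.elim _ _ (finSumFinEquiv.symm i) = w i
    rcases h : finSumFinEquiv.symm i with l | r
    · have hi : i = Fin.castAdd b l := by
        have := (Equiv.symm_apply_eq finSumFinEquiv).1 h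
        rwa [finSumFinEquiv_apply_left] at this
      rw [hi]
      rfl
    · have hi : i = Fin.natAdd a r := by
        have := (Equiv.symm_apply_eq finSumFinEquiv).1 h
        rwa [finSumFinEquiv_apply_right] at this
      rw [hi]
      rfl

lemma wt_glue_le (hB : ∀ x ∈ SFT M, |φ x| ≤ B) {Y : Set (ℤ → Fin N)} (hY : Y ⊆ SFT M)
    (hsh : ∀ x ∈ Y, shift x ∈ Y) {a b : ℕ} (u : Fin a → Fin N) (v : Fin b → Fin N) :
    wt φ Y (glue u v) ≤ wt φ Y u * wt φ Y v := by
  unfold wt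
  split
  · rename_i h
    obtain ⟨x₀, hx₀⟩ := h
    have hm₀ := mem_cyl_glue hsh hx₀
    rw [if_pos ⟨x₀, hm₀.1⟩, if_pos ⟨shift^[a] x₀, hm₀.2⟩, ← Real.exp_add]
    apply Real.exp_le_exp.2
    apply csSup_le (Set.Nonempty.image _ ⟨x₀, hx₀⟩)
    rintro s ⟨x, hx, rfl⟩
    have hm := mem_cyl_glue hsh hx
    rw [birk_add]
    have t1 : birk φ a x ≤ sSup (birk φ a '' cylSet Y u) :=
      le_csSup (bddAbove_birk_image hB hY u) ⟨x, hm.1, rfl⟩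
    have t2 : birk φ b (shift^[a] x) ≤ sSup (birk φ b '' cylSet Y v) :=
      le_csSup (bddAbove_birk_image hB hY v) ⟨shift^[a] x, hm.2, rfl⟩
    linarith
  · have h1 : (0:ℝ) ≤ wt φ Y u := wt_nonneg φ Y u
    have h2 : (0:ℝ) ≤ wt φ Y v := wt_nonneg φ Y v
    unfold wt at h1 h2
    nlinarith

lemma partitionFn_submul (hB : ∀ x ∈ SFT M, |φ x| ≤ B) {Y : Set (ℤ → Fin N)}
    (hY : Y ⊆ SFT M) (hsh : ∀ x ∈ Y, shift x ∈ Y) (a b : ℕ) :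
    partitionFn φ Y (a + b) ≤ partitionFn φ Y a * partitionFn φ Y b := by
  rw [partitionFn_eq, partitionFn_eq, partitionFn_eq, Finset.sum_mul_sum]
  have hsum : ∑ w : Fin (a + b) → Fin N, wt φ Y w
      = ∑ p : (Fin a → Fin N) × (Fin b → Fin N), wt φ Y (glue p.1 p.2) := by
    exact (Fintype.sum_bijective _ glue_bijective _ _ (fun p => rfl)).symm
  rw [hsum, Fintype.sum_prod_type]
  apply Finset.sum_le_sum
  intro u _
  apply Finset.sum_le_sum
  intro v _
  exact wt_glue_le hB hY hsh u v

lemma pressure_facts (hB0 : 0 ≤ B) (hB : ∀ x ∈ SFT M, |φ x| ≤ B) {Y : Set (ℤ → Fin N)}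
    (hY : Y ⊆ SFT M) (hsh : ∀ x ∈ Y, shift x ∈ Y) (hne : Y.Nonempty) :
    (∀ n : ℕ, n ≠ 0 → pressure φ Y ≤ Real.log (partitionFn φ Y n) / n) ∧
    Tendsto (fun n : ℕ => Real.log (partitionFn φ Y n) / n) atTop (𝓝 (pressure φ Y)) := by
  set u : ℕ → ℝ := fun n => Real.log (partitionFn φ Y n) with hu
  have hZpos : ∀ n, 0 < partitionFn φ Y n := partitionFn_pos φ hne
  have hlow : ∀ n : ℕ, -(n * B) ≤ u n := by
    intro n
    obtain ⟨x, hx⟩ := hne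
    have h1 : Real.exp (-((n:ℝ) * B)) ≤ partitionFn φ Y n := by
      rw [partitionFn_eq]
      have hw : (cylSet Y (fun i : Fin n => x (i : ℕ))).Nonempty := ⟨x, hx, fun i => rfl⟩
      calc Real.exp (-((n:ℝ) * B)) ≤ wt φ Y (fun i : Fin n => x (i : ℕ)) :=
            exp_le_wt hB hY hw
        _ ≤ _ := Finset.single_le_sum (fun w _ => wt_nonneg φ Y w) (Finset.mem_univ _)
    have := Real.log_le_log (Real.exp_pos _) h1
    rwa [Real.log_exp] at this
  have hsub : Subadditive u := by
    intro p q
    have h := partitionFn_submul hB hY hsh p q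
    calc u (p + q) ≤ Real.log (partitionFn φ Y p * partitionFn φ Y q) :=
          Real.log_le_log (hZpos (p + q)) h
      _ = u p + u q := Real.log_mul (hZpos p).ne' (hZpos q).ne'
  have hbdd : BddBelow (Set.range fun n : ℕ => u n / n) := by
    refine ⟨-B, ?_⟩
    rintro s ⟨n, rfl⟩
    rcases Nat.eq_zero_or_pos n with rfl | hn
    · simp only [Nat.cast_zero, div_zero]
      linarith
    · have h1 := hlow n
      have hn' : (0:ℝ) < n := by exact_mod_cast hn
      show -B ≤ u n / n
      rw [le_div_iff₀ hn']
      calc -B * n = -((n:ℝ) * B) := by ring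
        _ ≤ u n := h1
  have htend : Tendsto (fun n : ℕ => u n / n) atTop (𝓝 hsub.lim) := hsub.tendsto_lim hbdd
  have hplim : pressure φ Y = hsub.lim := htend.limsup_eq
  constructor
  · intro n hn
    rw [hplim]
    exact hsub.lim_le_div hbdd hn
  · rw [hplim]
    exact htend

end Submult

section Supermult

variable {M : Fin N → Fin N → Bool} {φ : (ℤ → Fin N) → ℝ} {B C θ : ℝ} {m : ℕ}

lemma adm_of_nonempty {n : ℕ} {w : Fin n → Fin N}
    (h : (cylSet (SFT M) w).Nonempty) :
    ∀ i j : Fin n, (j : ℕ) = (i : ℕ) + 1 → M (w i) (w j) = true := by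
  obtain ⟨x, hxS, hxc⟩ := h
  intro i j hij
  have h1 : x ((i : ℕ) : ℤ) = w i := hxc i
  have h2 : x ((j : ℕ) : ℤ) = w j := hxc j
  have h3 : ((j : ℕ) : ℤ) = ((i : ℕ) : ℤ) + 1 := by exact_mod_cast hij
  rw [← h1, ← h2, h3]
  exact hxS ((i : ℕ) : ℤ)

lemma cyl_agree {Y : Set (ℤ → Fin N)} {n : ℕ} {w : Fin n → Fin N} {x y : ℤ → Fin N}
    (hx : x ∈ cylSet Y w) (hy : y ∈ cylSet Y w) :
    ∀ i : ℤ, 0 ≤ i → i ≤ (n : ℤ) - 1 → x i = y i := by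
  intro i h0 h1
  have hlt : i.toNat < n := by omega
  have hc : ((⟨i.toNat, hlt⟩ : Fin n) : ℕ) = i.toNat := rfl
  have e1 := hx.2 ⟨i.toNat, hlt⟩
  have e2 := hy.2 ⟨i.toNat, hlt⟩
  rw [hc] at e1 e2
  have : ((i.toNat : ℕ) : ℤ) = i := by omega
  rw [this] at e1 e2
  rw [e1, e2]

/-- The point of a cylinder has Birkhoff sum within `2C/(1-θ)` below the sup over the
cylinder. -/
lemma sSup_le_birk_add (hC : 0 < C) (hθ0 : 0 < θ) (hθ1 : θ < 1)
    (hH : ∀ n : ℕ, ∀ x ∈ SFT M, ∀ y ∈ SFT M, (∀ i : ℤ, |i| ≤ (n : ℤ) → x i = y i) →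
      |φ x - φ y| ≤ C * θ ^ n)
    (hB : ∀ x ∈ SFT M, |φ x| ≤ B)
    {n : ℕ} {w : Fin n → Fin N} {x : ℤ → Fin N} (hx : x ∈ cylSet (SFT M) w) :
    sSup (birk φ n '' cylSet (SFT M) w) ≤ birk φ n x + 2 * (C * (1 - θ)⁻¹) := by
  apply csSup_le (Set.Nonempty.image _ ⟨x, hx⟩)
  rintro s ⟨y, hy, rfl⟩
  have h := birk_close hC hθ0 hθ1 hH hy.1 hx.1 n (cyl_agree hy hx)
  rw [abs_le] at h
  linarith [h.2]

lemma partitionFn_supermul (hC : 0 < C) (hθ0 : 0 < θ) (hθ1 : θ < 1)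
    (hH : ∀ n : ℕ, ∀ x ∈ SFT M, ∀ y ∈ SFT M, (∀ i : ℤ, |i| ≤ (n : ℤ) → x i = y i) →
      |φ x - φ y| ≤ C * θ ^ n)
    (hB : ∀ x ∈ SFT M, |φ x| ≤ B) (hB0 : 0 ≤ B) (hm : 1 ≤ m)
    (hpath : ∀ a b : Fin N, ∃ w : ℕ → Fin N, w 0 = a ∧ w m = b ∧
      ∀ k < m, M (w k) (w (k + 1)) = true)
    {a b : ℕ} (ha : 1 ≤ a) (hb : 1 ≤ b) :
    Real.exp (-(2 * (2 * (C * (1 - θ)⁻¹)) + ((m : ℝ) - 1) * B)) *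
      (partitionFn φ (SFT M) a * partitionFn φ (SFT M) b)
      ≤ partitionFn φ (SFT M) (a + (m - 1) + b) := by
  classical
  set D1 := 2 * (2 * (C * (1 - θ)⁻¹)) + ((m : ℝ) - 1) * B with hD1
  set L := a + (m - 1) + b with hL
  have hL1 : 1 ≤ L := by omega
  have hbr : ∀ p : (Fin a → Fin N) × (Fin b → Fin N), ∃ β : ℕ → Fin N,
      β 0 = p.1 ⟨a - 1, by omega⟩ ∧ β m = p.2 ⟨0, by omega⟩ ∧
      ∀ k < m, M (β k) (β (k + 1)) = true := fun p => hpath _ _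
  choose β hβ0 hβm hβe using hbr
  set G : (Fin a → Fin N) × (Fin b → Fin N) → (Fin L → Fin N) := fun p i =>
    if h1 : (i : ℕ) < a then p.1 ⟨(i : ℕ), h1⟩
    else if h2 : (i : ℕ) < a + (m - 1) then β p ((i : ℕ) - a + 1)
    else p.2 ⟨(i : ℕ) - (a + (m - 1)), by have := i.isLt; omega⟩ with hG
  have G_left : ∀ p (i : Fin L) (h : (i : ℕ) < a), G p i = p.1 ⟨(i : ℕ), h⟩ := by
    intro p i h
    simp only [hG]
    rw [dif_pos h]
  have G_rt : ∀ p (i : Fin L) (h : a + (m - 1) ≤ (i : ℕ))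
      (h2 : (i : ℕ) - (a + (m - 1)) < b), G p i = p.2 ⟨(i : ℕ) - (a + (m - 1)), h2⟩ := by
    intro p i h h2
    simp only [hG]
    rw [dif_neg (by omega), dif_neg (by omega)]
  have G_at : ∀ p (i : Fin L) (t : ℕ), (i : ℕ) = a - 1 + t → t ≤ m → G p i = β p t := by
    intro p i t hit htm
    rcases Nat.eq_zero_or_pos t with rfl | ht0
    · rw [G_left p i (by omega), hβ0 p]
      exact congrArg p.1 (Fin.ext (by show (i : ℕ) = a - 1; omega))
    · rcases lt_or_ge t m with h2 | h2
      · simp only [hG]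
        rw [dif_neg (by omega), dif_pos (by omega)]
        congr 1
        omega
      · have htm' : t = m := by omega
        rw [htm']
        rw [G_rt p i (by omega) (by omega), hβm p]
        exact congrArg p.2 (Fin.ext (by show (i : ℕ) - (a + (m - 1)) = 0; omega))
  have hrec1 : ∀ p : (Fin a → Fin N) × (Fin b → Fin N),
      (fun i : Fin a => G p ⟨(i : ℕ), by have := i.isLt; omega⟩) = p.1 := by
    intro p
    funext i
    rw [G_left p _ i.isLt]
  have hrec2 : ∀ p : (Fin a → Fin N) × (Fin b → Fin N),
      (fun j : Fin b => G p ⟨a + (m - 1) + (j : ℕ), by have := j.isLt; omega⟩) = p.2 := by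
    intro p
    funext j
    rw [G_rt p _ (by show a + (m - 1) ≤ a + (m - 1) + (j : ℕ); omega)
      (by show a + (m - 1) + (j : ℕ) - (a + (m - 1)) < b; have := j.isLt; omega)]
    exact congrArg p.2 (Fin.ext
      (by show a + (m - 1) + (j : ℕ) - (a + (m - 1)) = (j : ℕ); omega))
  have G_inj : Function.Injective G := by
    intro p p' hpp
    have h1 : p.1 = p'.1 := by
      rw [← hrec1 p, ← hrec1 p', hpp]
    have h2 : p.2 = p'.2 := by
      rw [← hrec2 p, ← hrec2 p', hpp]
    exact Prod.ext h1 h2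
  -- main sum comparison
  rw [partitionFn_eq (n := L)]
  have step1 : ∑ p : (Fin a → Fin N) × (Fin b → Fin N), wt φ (SFT M) (G p)
      ≤ ∑ w : Fin L → Fin N, wt φ (SFT M) w := by
    rw [← Finset.sum_image (f := fun w => wt φ (SFT M) w)
      (g := G) (fun x _ y _ h => G_inj h)]
    apply Finset.sum_le_sum_of_subset_of_nonneg (Finset.subset_univ _)
    intro w _ _
    exact wt_nonneg φ _ w
  refine le_trans ?_ step1
  have hps : partitionFn φ (SFT M) a * partitionFn φ (SFT M) b
      = ∑ p : (Fin a → Fin N) × (Fin b → Fin N), wt φ (SFT M) p.1 * wt φ (SFT M) p.2 := by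
    rw [partitionFn_eq, partitionFn_eq, Finset.sum_mul_sum, ← Fintype.sum_prod_type']
  rw [hps, Finset.mul_sum]
  apply Finset.sum_le_sum
  rintro ⟨u, v⟩ _
  show Real.exp (-D1) * (wt φ (SFT M) u * wt φ (SFT M) v) ≤ wt φ (SFT M) (G (u, v))
  by_cases hu : (cylSet (SFT M) u).Nonempty
  swap
  · have hzero : wt φ (SFT M) u = 0 := by unfold wt; rw [if_neg hu]
    rw [hzero]
    simpa using wt_nonneg φ (SFT M) (G (u, v))
  by_cases hv : (cylSet (SFT M) v).Nonempty
  swap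
  · have hzero : wt φ (SFT M) v = 0 := by unfold wt; rw [if_neg hv]
    rw [hzero]
    simpa using wt_nonneg φ (SFT M) (G (u, v))
  have hadm : ∀ i j : Fin L, (j : ℕ) = (i : ℕ) + 1 → M (G (u, v) i) (G (u, v) j) = true := by
    intro i j hij
    have hiL := i.isLt
    have hjL := j.isLt
    rcases lt_or_ge ((j : ℕ)) a with h1 | h1
    · rw [G_left _ i (by omega), G_left _ j (by omega)]
      exact adm_of_nonempty hu ⟨(i : ℕ), by omega⟩ ⟨(j : ℕ), h1⟩ hij
    · rcases lt_or_ge ((i : ℕ)) (a + (m - 1)) with h2 | h2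
      · rw [G_at _ i ((i : ℕ) - (a - 1)) (by omega) (by omega),
          G_at _ j ((i : ℕ) - (a - 1) + 1) (by omega) (by omega)]
        exact hβe _ _ (by omega)
      · rw [G_rt _ i (by omega) (by omega), G_rt _ j (by omega) (by omega)]
        exact adm_of_nonempty hv ⟨(i : ℕ) - (a + (m - 1)), by omega⟩
          ⟨(j : ℕ) - (a + (m - 1)), by omega⟩
          (by show ((j : ℕ) - (a + (m - 1)) = (i : ℕ) - (a + (m - 1)) + 1); omega)
  have hGne : (cylSet (SFT M) (G (u, v))).Nonempty :=
    exists_extension hm hpath hL1 _ hadm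
  obtain ⟨x, hx⟩ := hGne
  have hxu : x ∈ cylSet (SFT M) u := by
    refine ⟨hx.1, fun i => ?_⟩
    have hiL : (i : ℕ) < L := by have := i.isLt; omega
    have h := hx.2 ⟨(i : ℕ), hiL⟩
    rw [G_left _ ⟨(i : ℕ), hiL⟩ i.isLt] at h
    exact h.trans (congrArg u (Fin.ext rfl))
  have hxv : shift^[a + (m - 1)] x ∈ cylSet (SFT M) v := by
    refine ⟨SFT_shift_iterate hx.1 _, fun j => ?_⟩
    have hjL : a + (m - 1) + (j : ℕ) < L := by have := j.isLt; omega
    have h := hx.2 ⟨a + (m - 1) + (j : ℕ), hjL⟩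
    rw [G_rt _ _ (by show a + (m - 1) ≤ a + (m - 1) + (j : ℕ); omega)
      (by show a + (m - 1) + (j : ℕ) - (a + (m - 1)) < b; have := j.isLt; omega)] at h
    have h2 : x (((a + (m - 1) + (j : ℕ) : ℕ)) : ℤ) = v j :=
      h.trans (congrArg v (Fin.ext
        (by show a + (m - 1) + (j : ℕ) - (a + (m - 1)) = (j : ℕ); omega)))
    rw [shift_iterate, ← h2]
    congr 1
    push_cast
    ring
  have hsplit : birk φ L x = birk φ (a + (m - 1)) x + birk φ b (shift^[a + (m - 1)] x) :=
    birk_add φ (a + (m - 1)) b x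
  have hsplit2 : birk φ (a + (m - 1)) x = birk φ a x + birk φ (m - 1) (shift^[a] x) :=
    birk_add φ a (m - 1) x
  have b1 : sSup (birk φ a '' cylSet (SFT M) u) ≤ birk φ a x + 2 * (C * (1 - θ)⁻¹) :=
    sSup_le_birk_add hC hθ0 hθ1 hH hB hxu
  have b2 : sSup (birk φ b '' cylSet (SFT M) v)
      ≤ birk φ b (shift^[a + (m - 1)] x) + 2 * (C * (1 - θ)⁻¹) :=
    sSup_le_birk_add hC hθ0 hθ1 hH hB hxv
  have b3 : -(((m : ℝ) - 1) * B) ≤ birk φ (m - 1) (shift^[a] x) := by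
    have h := birk_abs_le hB (SFT_shift_iterate hx.1 a) (m - 1)
    rw [abs_le] at h
    have hc : ((m - 1 : ℕ) : ℝ) ≤ (m : ℝ) := by
      have : (m - 1 : ℕ) ≤ m := by omega
      exact_mod_cast this
    have hc2 : ((m - 1 : ℕ) : ℝ) = (m : ℝ) - 1 := by
      rw [Nat.cast_sub hm, Nat.cast_one]
    rw [hc2] at h
    linarith [h.1]
  have hwt : wt φ (SFT M) u * wt φ (SFT M) v = Real.exp
      (sSup (birk φ a '' cylSet (SFT M) u) + sSup (birk φ b '' cylSet (SFT M) v)) := by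
    unfold wt
    rw [if_pos hu, if_pos hv, Real.exp_add]
  rw [hwt, ← Real.exp_add]
  have hle : Real.exp (birk φ L x) ≤ wt φ (SFT M) (G (u, v)) :=
    exp_birk_le_wt hB (le_refl _) hx
  refine le_trans ?_ hle
  apply Real.exp_le_exp.2
  rw [hsplit, hsplit2]
  simp only [hD1]
  linarith

end Supermult

section UpperGibbs

variable {M : Fin N → Fin N → Bool} {φ : (ℤ → Fin N) → ℝ} {B C θ : ℝ} {m : ℕ}

lemma log_partitionFn_le (hC : 0 < C) (hθ0 : 0 < θ) (hθ1 : θ < 1)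
    (hH : ∀ n : ℕ, ∀ x ∈ SFT M, ∀ y ∈ SFT M, (∀ i : ℤ, |i| ≤ (n : ℤ) → x i = y i) →
      |φ x - φ y| ≤ C * θ ^ n)
    (hB : ∀ x ∈ SFT M, |φ x| ≤ B) (hB0 : 0 ≤ B) (hm : 1 ≤ m)
    (hpath : ∀ a b : Fin N, ∃ w : ℕ → Fin N, w 0 = a ∧ w m = b ∧
      ∀ k < m, M (w k) (w (k + 1)) = true)
    (hSne : (SFT M).Nonempty) {a : ℕ} (ha : 1 ≤ a) :
    Real.log (partitionFn φ (SFT M) a)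
      ≤ ((a : ℝ) + ((m : ℝ) - 1)) * pressure φ (SFT M)
        + (2 * (2 * (C * (1 - θ)⁻¹)) + ((m : ℝ) - 1) * B) := by
  set D1 := 2 * (2 * (C * (1 - θ)⁻¹)) + ((m : ℝ) - 1) * B with hD1
  have hD1nn : 0 ≤ D1 := by
    rw [hD1]
    have h1 : 0 < (1 - θ)⁻¹ := inv_pos.2 (by linarith)
    have h2 : (0:ℝ) ≤ (m : ℝ) - 1 := by
      have : (1:ℝ) ≤ (m:ℝ) := by exact_mod_cast hm
      linarith
    have h3 := mul_nonneg h2 hB0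
    have h4 := mul_nonneg hC.le h1.le
    linarith
  set Z : ℕ → ℝ := fun n => partitionFn φ (SFT M) n with hZ
  have hZpos : ∀ n, 0 < Z n := fun n => partitionFn_pos φ hSne n
  set g : ℕ → ℝ := fun n => Real.log (Z n) with hg
  -- iteration
  have hiter : ∀ k : ℕ, 1 ≤ k →
      (k : ℝ) * g a - ((k : ℝ) - 1) * D1 ≤ g (k * a + (k - 1) * (m - 1)) := by
    intro k hk
    induction k with
    | zero => omega
    | succ k ih =>
      rcases Nat.eq_zero_or_pos k with rfl | hk1
      · have hidx : (0 + 1) * a + ((0 + 1) - 1) * (m - 1) = a := by omega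
        rw [hidx]
        push_cast
        linarith
      · have ihh := ih hk1
        have hA1 : 1 ≤ k * a + (k - 1) * (m - 1) := by
          calc 1 ≤ a := ha
            _ ≤ k * a := Nat.le_mul_of_pos_left a hk1
            _ ≤ _ := Nat.le_add_right _ _
        have hsm := partitionFn_supermul hC hθ0 hθ1 hH hB hB0 hm hpath
          (a := k * a + (k - 1) * (m - 1)) (b := a) hA1 ha
        obtain ⟨k', rfl⟩ : ∃ k', k = k' + 1 := ⟨k - 1, by omega⟩
        have hidx : (k' + 1) * a + ((k' + 1) - 1) * (m - 1) + (m - 1) + a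
            = (k' + 1 + 1) * a + ((k' + 1 + 1) - 1) * (m - 1) := by
          simp only [Nat.add_sub_cancel]
          ring
        rw [hidx] at hsm
        have hlog : Real.log (Real.exp (-D1) *
            (Z ((k' + 1) * a + ((k' + 1) - 1) * (m - 1)) * Z a))
            = -D1 + (g ((k' + 1) * a + ((k' + 1) - 1) * (m - 1)) + g a) := by
          rw [Real.log_mul (Real.exp_ne_zero _) (mul_pos (hZpos _) (hZpos _)).ne',
            Real.log_exp, Real.log_mul (hZpos _).ne' (hZpos _).ne']
        have h2 : -D1 + (g ((k' + 1) * a + ((k' + 1) - 1) * (m - 1)) + g a)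
            ≤ g ((k' + 1 + 1) * a + ((k' + 1 + 1) - 1) * (m - 1)) := by
          rw [← hlog]
          exact Real.log_le_log
            (mul_pos (Real.exp_pos _) (mul_pos (hZpos _) (hZpos _))) hsm
        have hcast : ((k' + 1 + 1 : ℕ) : ℝ) = ((k' + 1 : ℕ) : ℝ) + 1 := by push_cast; ring
        rw [hcast]
        nlinarith [ihh, h2]
  -- pass to the limit
  obtain ⟨hple, htend⟩ := pressure_facts hB0 hB (le_refl (SFT M)) (fun x hx => SFT_shift hx) hSne
  set P := pressure φ (SFT M) with hP
  have hma : (0:ℝ) < (a : ℝ) + ((m : ℝ) - 1) := by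
    have h1 : (1:ℝ) ≤ (a:ℝ) := by exact_mod_cast ha
    have h2 : (1:ℝ) ≤ (m:ℝ) := by exact_mod_cast hm
    linarith
  rw [← sub_le_iff_le_add, ← div_le_iff₀' hma]
  -- show (g a - D1)/(a + (m-1)) ≤ P via the subsequence n_k = k*a + (k-1)*(m-1)
  have hnk : Tendsto (fun k : ℕ => k * a + (k - 1) * (m - 1)) atTop atTop := by
    apply tendsto_atTop_mono (fun k => ?_) tendsto_id
    calc (id k : ℕ) = k := rfl
      _ ≤ k * a := Nat.le_mul_of_pos_right k (by omega)
      _ ≤ _ := Nat.le_add_right _ _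
  have hq : Tendsto (fun k : ℕ => ((g a - D1) + D1 / k) /
      (((a : ℝ) + ((m : ℝ) - 1)) - ((m : ℝ) - 1) / k)) atTop
      (𝓝 ((g a - D1) / ((a : ℝ) + ((m : ℝ) - 1)))) := by
    have t1 : Tendsto (fun k : ℕ => (g a - D1) + D1 / k) atTop (𝓝 (g a - D1)) := by
      have h := Tendsto.const_add (g a - D1) (tendsto_const_div_atTop_nhds_zero_nat D1)
      simpa using h
    have t2 : Tendsto (fun k : ℕ => ((a : ℝ) + ((m : ℝ) - 1)) - ((m : ℝ) - 1) / k) atTop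
        (𝓝 ((a : ℝ) + ((m : ℝ) - 1))) := by
      have h := Tendsto.const_sub ((a : ℝ) + ((m : ℝ) - 1))
        (tendsto_const_div_atTop_nhds_zero_nat ((m : ℝ) - 1))
      simpa using h
    exact t1.div t2 hma.ne'
  refine le_of_tendsto_of_tendsto hq (htend.comp hnk) ?_
  filter_upwards [eventually_ge_atTop 1] with k hk
  show ((g a - D1) + D1 / k) / (((a : ℝ) + ((m : ℝ) - 1)) - ((m : ℝ) - 1) / k)
    ≤ Real.log (partitionFn φ (SFT M) (k * a + (k - 1) * (m - 1)))
      / ((k * a + (k - 1) * (m - 1) : ℕ) : ℝ)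
  have h1 : (1:ℝ) ≤ (a:ℝ) := by exact_mod_cast ha
  have h2 : (1:ℝ) ≤ (m:ℝ) := by exact_mod_cast hm
  have h3 : (1:ℝ) ≤ (k:ℝ) := by exact_mod_cast hk
  have hkR : (0:ℝ) < (k:ℝ) := by linarith
  have hnkR : ((k * a + (k - 1) * (m - 1) : ℕ) : ℝ)
      = (k:ℝ) * (a:ℝ) + ((k:ℝ) - 1) * ((m:ℝ) - 1) := by
    push_cast [Nat.cast_sub hk, Nat.cast_sub hm]
    ring
  have hden : (0:ℝ) < (k:ℝ) * (a:ℝ) + ((k:ℝ) - 1) * ((m:ℝ) - 1) := by nlinarith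
  have hden1 : (0:ℝ) < ((a : ℝ) + ((m : ℝ) - 1)) - ((m : ℝ) - 1) / k := by
    have hdd : ((m:ℝ) - 1) / k ≤ (m:ℝ) - 1 := div_le_self (by linarith) h3
    linarith
  have hqeq : ((g a - D1) + D1 / k) / (((a : ℝ) + ((m : ℝ) - 1)) - ((m : ℝ) - 1) / k)
      = ((k:ℝ) * (g a - D1) + D1) / ((k:ℝ) * (a:ℝ) + ((k:ℝ) - 1) * ((m:ℝ) - 1)) := by
    rw [div_eq_div_iff hden1.ne' hden.ne']
    field_simp
    ring
  have hnum : (k:ℝ) * (g a - D1) + D1 ≤ g (k * a + (k - 1) * (m - 1)) := by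
    have e : (k:ℝ) * (g a - D1) + D1 = (k:ℝ) * g a - ((k:ℝ) - 1) * D1 := by ring
    rw [e]
    exact hiter k hk
  rw [hqeq, hnkR]
  exact (div_le_div_iff_of_pos_right hden).2 hnum


end UpperGibbs

section Replacement

variable {M : Fin N → Fin N → Bool} {φ : (ℤ → Fin N) → ℝ} {B C θ : ℝ} {m : ℕ}

lemma replacement (hC : 0 < C) (hθ0 : 0 < θ) (hθ1 : θ < 1)
    (hH : ∀ n : ℕ, ∀ x ∈ SFT M, ∀ y ∈ SFT M, (∀ i : ℤ, |i| ≤ (n : ℤ) → x i = y i) →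
      |φ x - φ y| ≤ C * θ ^ n)
    (hB : ∀ x ∈ SFT M, |φ x| ≤ B) (hB0 : 0 ≤ B) (hm : 1 ≤ m)
    (hpath : ∀ a b : Fin N, ∃ w : ℕ → Fin N, w 0 = a ∧ w m = b ∧
      ∀ k < m, M (w k) (w (k + 1)) = true)
    (e : Fin N) (K : ℕ) (hK : 1 ≤ K) :
    (1 + (K : ℝ) * (Real.exp (-(2 * (2 * (C * (1 - θ)⁻¹)) + 4 * (m : ℝ) * B))
        * (((N : ℝ) ^ (2 * m))⁻¹))) *
      partitionFn φ {x ∈ SFT M | ∀ t : ℤ, x t ≠ e} (K * (2 * m + 1) + 1)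
      ≤ partitionFn φ (SFT M) (K * (2 * m + 1) + 1) := by
  classical
  have hN : 0 < N := e.pos
  set D0 := 2 * (2 * (C * (1 - θ)⁻¹)) + 4 * (m : ℝ) * B with hD0
  set r := 2 * m + 1 with hr
  set n := K * r + 1 with hn
  have hn1 : 1 ≤ n := by omega
  set Y' : Set (ℤ → Fin N) := {x ∈ SFT M | ∀ t : ℤ, x t ≠ e} with hY'def
  have hY'sub : Y' ⊆ SFT M := fun x hx => hx.1
  set W : (Fin n → Fin N) → ℝ := fun w => wt φ (SFT M) w with hW
  set Adm0 : Finset (Fin n → Fin N) :=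
    Finset.univ.filter (fun w => (cylSet (SFT M) w).Nonempty ∧ ∀ i, w i ≠ e) with hAdm0
  set A := ∑ w ∈ Adm0, W w with hA
  have hWnn : ∀ w, 0 ≤ W w := fun w => wt_nonneg φ _ w
  have hAnn : 0 ≤ A := Finset.sum_nonneg fun w _ => hWnn w
  -- Step A : Z' ≤ A
  have stepA : partitionFn φ Y' n ≤ A := by
    rw [partitionFn_eq, hA]
    have h1 : ∀ w : Fin n → Fin N, wt φ Y' w ≤ if w ∈ Adm0 then W w else 0 := by
      intro w
      by_cases hcyl : (cylSet Y' w).Nonempty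
      · obtain ⟨x, hx⟩ := hcyl
        have hmem : w ∈ Adm0 := by
          rw [hAdm0, Finset.mem_filter]
          refine ⟨Finset.mem_univ _, ⟨x, cylSet_mono hY'sub w hx⟩, fun i => ?_⟩
          rw [← hx.2 i]
          exact hx.1.2 _
        rw [if_pos hmem]
        exact wt_mono hB (le_refl (SFT M)) hY'sub w
      · have : wt φ Y' w = 0 := by unfold wt; rw [if_neg hcyl]
        rw [this]
        split
        · exact hWnn _
        · exact le_refl 0
    calc ∑ w : Fin n → Fin N, wt φ Y' w
        ≤ ∑ w : Fin n → Fin N, (if w ∈ Adm0 then W w else 0) := Finset.sum_le_sum fun w _ => h1 w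
      _ = ∑ w ∈ Finset.univ ∩ Adm0, W w := Finset.sum_ite_mem _ _ _
      _ = A := by rw [Finset.univ_inter, hA]
  -- the replacement maps
  have hpath1 := path_ge hm hpath 1
  choose f1 hf10 hf1m hf1e using fun a : Fin N => hpath a e
  choose f2 hf20 hf2m hf2e using fun b : Fin N => hpath1 e b
  set idx : ℕ → Fin n := fun t => ⟨t % n, Nat.mod_lt _ (by omega)⟩ with hidx
  set R : ℕ → (Fin n → Fin N) → (Fin n → Fin N) := fun j w i =>
    if (i : ℕ) ≤ j * r then w i
    else if (i : ℕ) ≤ j * r + m then f1 (w (idx (j * r))) ((i : ℕ) - j * r)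
    else if (i : ℕ) ≤ j * r + 2 * m then f2 (w (idx (j * r + 2 * m + 1))) ((i : ℕ) - (j * r + m))
    else w i with hR
  have E1 : ∀ j w (i : Fin n), ((i : ℕ) ≤ j * r ∨ j * r + 2 * m + 1 ≤ (i : ℕ)) →
      R j w i = w i := by
    intro j w i h
    simp only [hR]
    rcases h with h | h
    · rw [if_pos h]
    · rw [if_neg (by omega), if_neg (by omega), if_neg (by omega)]
  have E2 : ∀ j w (i : Fin n) (t : ℕ), (i : ℕ) = j * r + t → t ≤ m →
      R j w i = f1 (w (idx (j * r))) t := by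
    intro j w i t hit htm
    have hjrn : j * r < n := by have := i.isLt; omega
    rcases Nat.eq_zero_or_pos t with rfl | ht0
    · rw [E1 j w i (Or.inl (by omega)), hf10]
      refine congrArg w (Fin.ext ?_)
      show (i : ℕ) = j * r % n
      rw [Nat.mod_eq_of_lt hjrn]
      omega
    · simp only [hR]
      rw [if_neg (by omega), if_pos (by omega)]
      congr 1
      omega
  have E3 : ∀ j w (i : Fin n) (t : ℕ), (i : ℕ) = j * r + m + t → t ≤ m + 1 →
      R j w i = f2 (w (idx (j * r + 2 * m + 1))) t := by
    intro j w i t hit htm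
    rcases Nat.eq_zero_or_pos t with rfl | ht0
    · rw [E2 j w i m (by omega) (le_refl m), hf1m, hf20]
    · rcases Nat.lt_or_ge t (m + 1) with h2 | h2
      · simp only [hR]
        rw [if_neg (by omega), if_neg (by omega), if_pos (by omega)]
        congr 1
        omega
      · have ht : t = m + 1 := by omega
        subst ht
        have hlt : j * r + 2 * m + 1 < n := by have := i.isLt; omega
        rw [E1 j w i (Or.inr (by omega)), hf2m]
        refine congrArg w (Fin.ext ?_)
        show (i : ℕ) = (j * r + 2 * m + 1) % n
        rw [Nat.mod_eq_of_lt hlt]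
        omega
  -- admissibility of replaced words
  have P1 : ∀ j, j < K → ∀ w ∈ Adm0, (cylSet (SFT M) (R j w)).Nonempty := by
    intro j hj w hw
    have hwadm : ∀ i i' : Fin n, (i' : ℕ) = (i : ℕ) + 1 → M (w i) (w i') = true := by
      rw [hAdm0, Finset.mem_filter] at hw
      exact adm_of_nonempty hw.2.1
    apply exists_extension hm hpath hn1
    intro i i' hii
    have hiL := i.isLt
    have hi'L := i'.isLt
    rcases le_or_gt ((i' : ℕ)) (j * r) with h1 | h1
    · rw [E1 j w i (Or.inl (by omega)), E1 j w i' (Or.inl (by omega))]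
      exact hwadm i i' hii
    · rcases le_or_gt ((i' : ℕ)) (j * r + m) with h2 | h2
      · set t := (i : ℕ) - j * r with htd
        rw [E2 j w i t (by omega) (by omega), E2 j w i' (t + 1) (by omega) (by omega)]
        exact hf1e _ t (by omega)
      · rcases le_or_gt ((i' : ℕ)) (j * r + 2 * m + 1) with h3 | h3
        · set t := (i : ℕ) - (j * r + m) with htd
          rw [E3 j w i t (by omega) (by omega), E3 j w i' (t + 1) (by omega) (by omega)]
          exact hf2e _ t (by omega)
        · rw [E1 j w i (Or.inr (by omega)), E1 j w i' (Or.inr (by omega))]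
          exact hwadm i i' hii
  -- weight comparison
  have P3 : ∀ j, j < K → ∀ w ∈ Adm0, Real.exp (-D0) * W w ≤ W (R j w) := by
    intro j hj w hw
    have hwne : (cylSet (SFT M) w).Nonempty := by
      rw [hAdm0, Finset.mem_filter] at hw
      exact hw.2.1
    obtain ⟨y, hy⟩ := P1 j hj w hw
    have hjrn : j * r + 2 * m + 1 ≤ K * r := by
      have h1 : (j + 1) * r ≤ K * r := Nat.mul_le_mul_right r (by omega)
      calc j * r + 2 * m + 1 = (j + 1) * r := by rw [hr]; ring
        _ ≤ K * r := h1
    -- Birkhoff comparison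
    have key : ∀ x ∈ cylSet (SFT M) w, birk φ n x - D0 ≤ birk φ n y := by
      intro x hx
      have hxS : x ∈ SFT M := hx.1
      have hyS : y ∈ SFT M := hy.1
      -- agreement on [0, j*r]
      have hagl : ∀ i : ℤ, 0 ≤ i → i ≤ (j * r : ℕ) → x i = y i := by
        intro i h0 h1
        have hlt : i.toNat < n := by omega
        have e1 := hx.2 ⟨i.toNat, hlt⟩
        have e2 := hy.2 ⟨i.toNat, hlt⟩
        have e3 : R j w ⟨i.toNat, hlt⟩ = w ⟨i.toNat, hlt⟩ :=
          E1 j w _ (Or.inl (by show i.toNat ≤ j * r; omega))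
        rw [e3] at e2
        have hcast : ((i.toNat : ℕ) : ℤ) = i := by omega
        rw [hcast] at e1 e2
        rw [e1, e2]
      have hagr : ∀ i : ℤ, (j * r + 2 * m + 1 : ℕ) ≤ i → i ≤ (n : ℤ) - 1 → x i = y i := by
        intro i h0 h1
        have hlt : i.toNat < n := by omega
        have e1 := hx.2 ⟨i.toNat, hlt⟩
        have e2 := hy.2 ⟨i.toNat, hlt⟩
        have e3 : R j w ⟨i.toNat, hlt⟩ = w ⟨i.toNat, hlt⟩ :=
          E1 j w _ (Or.inr (by show j * r + 2 * m + 1 ≤ i.toNat; omega))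
        rw [e3] at e2
        have hcast : ((i.toNat : ℕ) : ℤ) = i := by omega
        rw [hcast] at e1 e2
        rw [e1, e2]
      have z1 : |∑ k ∈ Finset.Ico 0 (j * r + 1), (φ (shift^[k] x) - φ (shift^[k] y))|
          ≤ 2 * (C * (1 - θ)⁻¹) :=
        birk_zone hC hθ0 hθ1 hH hxS hyS 0 ((j * r : ℕ) : ℤ) hagl 0 (j * r + 1)
          (fun k hk1 hk2 => ⟨by omega, by exact_mod_cast Nat.le_of_lt_succ hk2⟩)
      have z3 : |∑ k ∈ Finset.Ico (j * r + 2 * m + 1) n, (φ (shift^[k] x) - φ (shift^[k] y))|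
          ≤ 2 * (C * (1 - θ)⁻¹) :=
        birk_zone hC hθ0 hθ1 hH hxS hyS ((j * r + 2 * m + 1 : ℕ) : ℤ) ((n : ℤ) - 1) hagr
          (j * r + 2 * m + 1) n (fun k hk1 hk2 => ⟨by exact_mod_cast hk1, by omega⟩)
      have z2 : |∑ k ∈ Finset.Ico (j * r + 1) (j * r + 2 * m + 1),
          (φ (shift^[k] x) - φ (shift^[k] y))| ≤ 4 * (m : ℝ) * B := by
        calc |∑ k ∈ Finset.Ico (j * r + 1) (j * r + 2 * m + 1),
            (φ (shift^[k] x) - φ (shift^[k] y))|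
            ≤ ∑ k ∈ Finset.Ico (j * r + 1) (j * r + 2 * m + 1),
              |φ (shift^[k] x) - φ (shift^[k] y)| := Finset.abs_sum_le_sum_abs _ _
          _ ≤ ∑ _k ∈ Finset.Ico (j * r + 1) (j * r + 2 * m + 1), (2 * B) := by
              apply Finset.sum_le_sum
              intro k _
              have b1 := hB _ (SFT_shift_iterate hxS k)
              have b2 := hB _ (SFT_shift_iterate hyS k)
              calc |φ (shift^[k] x) - φ (shift^[k] y)|
                  ≤ |φ (shift^[k] x)| + |φ (shift^[k] y)| := abs_sub _ _
                _ ≤ 2 * B := by linarith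
          _ = ((j * r + 2 * m + 1 - (j * r + 1) : ℕ) : ℝ) * (2 * B) := by
              rw [Finset.sum_const, Nat.card_Ico, nsmul_eq_mul]
          _ ≤ 4 * (m : ℝ) * B := by
              have hcard : j * r + 2 * m + 1 - (j * r + 1) = 2 * m := by omega
              rw [hcard]
              push_cast
              exact le_of_eq (by ring)
      have hsplit : birk φ n x - birk φ n y
          = (∑ k ∈ Finset.Ico 0 (j * r + 1), (φ (shift^[k] x) - φ (shift^[k] y)))
            + (∑ k ∈ Finset.Ico (j * r + 1) (j * r + 2 * m + 1),
                (φ (shift^[k] x) - φ (shift^[k] y)))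
            + (∑ k ∈ Finset.Ico (j * r + 2 * m + 1) n,
                (φ (shift^[k] x) - φ (shift^[k] y))) := by
        unfold birk
        rw [← Finset.sum_sub_distrib, Finset.range_eq_Ico]
        rw [← Finset.sum_Ico_consecutive _ (by omega : 0 ≤ j * r + 1)
          (by omega : j * r + 1 ≤ n)]
        rw [← Finset.sum_Ico_consecutive _ (by omega : j * r + 1 ≤ j * r + 2 * m + 1)
          (by omega : j * r + 2 * m + 1 ≤ n)]
        ring
      rw [abs_le] at z1 z2 z3
      rw [hD0]
      linarith [hsplit, z1.1, z2.1, z3.1, z1.2, z2.2, z3.2]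
    -- conclude weight bound
    have hWw : W w = Real.exp (sSup (birk φ n '' cylSet (SFT M) w)) := by
      show wt φ (SFT M) w = _
      unfold wt
      rw [if_pos hwne]
    have hWR : Real.exp (birk φ n y) ≤ W (R j w) := exp_birk_le_wt hB (le_refl _) hy
    have hsup : sSup (birk φ n '' cylSet (SFT M) w) ≤ birk φ n y + D0 := by
      apply csSup_le (Set.Nonempty.image _ hwne)
      rintro s ⟨x, hx, rfl⟩
      linarith [key x hx]
    calc Real.exp (-D0) * W w = Real.exp (-D0 + sSup (birk φ n '' cylSet (SFT M) w)) := by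
          rw [hWw, Real.exp_add]
      _ ≤ Real.exp (birk φ n y) := Real.exp_le_exp.2 (by linarith)
      _ ≤ W (R j w) := hWR
  -- index bound helper
  have hjrle : ∀ j, j < K → j * r + 2 * m + 1 ≤ K * r := by
    intro j hj
    have h1 : (j + 1) * r ≤ K * r := Nat.mul_le_mul_right r (by omega)
    have h2 : (j + 1) * r = j * r + r := by ring
    omega
  -- center letter of each replaced word is the removed symbol
  have F1 : ∀ j w (i : Fin n), (i : ℕ) = j * r + m → (R j w) i = e := by
    intro j w i hi
    rw [E2 j w i m hi (le_refl m), hf1m]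
  -- fiber bound
  have P4 : ∀ j, j < K → ∀ y : Fin n → Fin N,
      (Adm0.filter (fun w => R j w = y)).card ≤ N ^ (2 * m) := by
    intro j hj y
    have hjK := hjrle j hj
    have hinj : Set.InjOn
        (fun w : Fin n → Fin N => (fun t : Fin (2 * m) =>
          w ⟨j * r + 1 + (t : ℕ), by have := t.isLt; omega⟩))
        ↑(Adm0.filter (fun w => R j w = y)) := by
      intro w hw w' hw' hww
      have hwf := Finset.mem_filter.1 (Finset.mem_coe.1 hw)
      have hw'f := Finset.mem_filter.1 (Finset.mem_coe.1 hw')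
      funext i
      rcases le_or_gt ((i : ℕ)) (j * r) with h | h
      · have e1 : w i = y i := by rw [← hwf.2, E1 j w i (Or.inl h)]
        have e2 : w' i = y i := by rw [← hw'f.2, E1 j w' i (Or.inl h)]
        rw [e1, e2]
      · rcases le_or_gt (j * r + 2 * m + 1) ((i : ℕ)) with h2 | h2
        · have e1 : w i = y i := by rw [← hwf.2, E1 j w i (Or.inr h2)]
          have e2 : w' i = y i := by rw [← hw'f.2, E1 j w' i (Or.inr h2)]
          rw [e1, e2]
        · set t := (i : ℕ) - (j * r + 1) with htd
          have ht : t < 2 * m := by omega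
          have e1 : w ⟨j * r + 1 + t, by have := i.isLt; omega⟩ = w i :=
            congrArg w (Fin.ext (by show j * r + 1 + t = (i : ℕ); omega))
          have e2 : w' ⟨j * r + 1 + t, by have := i.isLt; omega⟩ = w' i :=
            congrArg w' (Fin.ext (by show j * r + 1 + t = (i : ℕ); omega))
          have e3 := congrFun hww ⟨t, ht⟩
          simp only at e3
          rw [← e1, ← e2]
          convert e3 using 2 <;> exact (Fin.ext rfl)
    calc (Adm0.filter (fun w => R j w = y)).card
        ≤ (Finset.univ : Finset (Fin (2 * m) → Fin N)).card :=
          Finset.card_le_card_of_injOn _ (fun w _ => Finset.mem_univ _) hinj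
      _ = N ^ (2 * m) := by
          rw [Finset.card_univ, Fintype.card_fun, Fintype.card_fin, Fintype.card_fin]
  set S : ℕ → Finset (Fin n → Fin N) := fun j => Adm0.image (R j) with hS
  have hpowpos : (0:ℝ) < (N : ℝ) ^ (2 * m) := by
    have : (0:ℝ) < (N : ℝ) := by exact_mod_cast hN
    positivity
  have key_j : ∀ j, j < K → Real.exp (-D0) * A ≤ ((N:ℝ) ^ (2 * m)) * ∑ y ∈ S j, W y := by
    intro j hj
    have h1 : ∑ w ∈ Adm0, W (R j w) ≤ ((N:ℝ) ^ (2 * m)) * ∑ y ∈ S j, W y := by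
      rw [← Finset.sum_fiberwise_of_maps_to
        (fun w hw => Finset.mem_image_of_mem (R j) hw) (fun w => W (R j w))]
      rw [Finset.mul_sum]
      apply Finset.sum_le_sum
      intro y _
      calc ∑ w ∈ Adm0.filter (fun w => R j w = y), W (R j w)
          = ∑ w ∈ Adm0.filter (fun w => R j w = y), W y := by
            apply Finset.sum_congr rfl
            intro w hw
            rw [(Finset.mem_filter.1 hw).2]
        _ = ((Adm0.filter (fun w => R j w = y)).card : ℝ) * W y := by
            rw [Finset.sum_const, nsmul_eq_mul]
        _ ≤ ((N:ℝ) ^ (2 * m)) * W y := by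
            apply mul_le_mul_of_nonneg_right _ (hWnn y)
            exact_mod_cast P4 j hj y
    have h2 : Real.exp (-D0) * A ≤ ∑ w ∈ Adm0, W (R j w) := by
      rw [hA, Finset.mul_sum]
      exact Finset.sum_le_sum (fun w hw => P3 j hj w hw)
    linarith
  -- disjointness
  have hdjmain : ∀ j j', j < j' → j' < K → Disjoint (S j) (S j') := by
    intro j j' hjj hj'
    rw [Finset.disjoint_left]
    intro y hyj hyj'
    obtain ⟨w, hw, hweq⟩ := Finset.mem_image.1 hyj
    obtain ⟨w', _, hw'eq⟩ := Finset.mem_image.1 hyj'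
    have hpos : j' * r + m < n := by have := hjrle j' hj'; omega
    have hge : j * r + 2 * m + 1 ≤ j' * r + m := by
      have h1 : (j + 1) * r ≤ j' * r := Nat.mul_le_mul_right r (by omega)
      have h2 : (j + 1) * r = j * r + r := by ring
      omega
    have e1 : (R j w) ⟨j' * r + m, hpos⟩ = w ⟨j' * r + m, hpos⟩ :=
      E1 j w _ (Or.inr (by show j * r + 2 * m + 1 ≤ j' * r + m; omega))
    have e2 : (R j' w') ⟨j' * r + m, hpos⟩ = e := F1 j' w' _ rfl
    have hwa := (Finset.mem_filter.1 hw).2.2 ⟨j' * r + m, hpos⟩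
    apply hwa
    rw [← e1, hweq, ← hw'eq, e2]
  have hdj : (↑(Finset.range K) : Set ℕ).PairwiseDisjoint S := by
    intro j hj j' hj' hne
    rw [Finset.mem_coe, Finset.mem_range] at hj hj'
    rcases lt_or_gt_of_ne hne with h | h
    · exact hdjmain j j' h hj'
    · exact (hdjmain j' j h hj).symm
  have hdj0 : Disjoint Adm0 ((Finset.range K).biUnion S) := by
    rw [Finset.disjoint_left]
    intro w hw hmem
    obtain ⟨j, hj, hwj⟩ := Finset.mem_biUnion.1 hmem
    rw [Finset.mem_range] at hj
    obtain ⟨w', _, heq⟩ := Finset.mem_image.1 hwj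
    have hpos : j * r + m < n := by have := hjrle j hj; omega
    have e2 : (R j w') ⟨j * r + m, hpos⟩ = e := F1 j w' _ rfl
    rw [heq] at e2
    exact (Finset.mem_filter.1 hw).2.2 ⟨j * r + m, hpos⟩ e2
  -- final assembly
  have hSsum : ∀ j, j < K →
      Real.exp (-D0) * ((N:ℝ) ^ (2 * m))⁻¹ * A ≤ ∑ y ∈ S j, W y := by
    intro j hj
    have hstep : (Real.exp (-D0) * A) / ((N:ℝ) ^ (2 * m)) ≤ ∑ y ∈ S j, W y := by
      rw [div_le_iff₀ hpowpos]
      calc Real.exp (-D0) * A ≤ ((N:ℝ) ^ (2 * m)) * ∑ y ∈ S j, W y := key_j j hj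
        _ = (∑ y ∈ S j, W y) * ((N:ℝ) ^ (2 * m)) := by ring
    calc Real.exp (-D0) * ((N:ℝ) ^ (2 * m))⁻¹ * A
        = (Real.exp (-D0) * A) / ((N:ℝ) ^ (2 * m)) := by rw [div_eq_mul_inv]; ring
      _ ≤ _ := hstep
  have hsum_union : ∑ w ∈ Adm0 ∪ (Finset.range K).biUnion S, W w
      = A + ∑ j ∈ Finset.range K, ∑ y ∈ S j, W y := by
    rw [Finset.sum_union hdj0, Finset.sum_biUnion hdj, hA]
  have total : A + (K:ℝ) * (Real.exp (-D0) * ((N:ℝ) ^ (2 * m))⁻¹ * A)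
      ≤ partitionFn φ (SFT M) n := by
    calc A + (K:ℝ) * (Real.exp (-D0) * ((N:ℝ) ^ (2 * m))⁻¹ * A)
        = A + ∑ _j ∈ Finset.range K, (Real.exp (-D0) * ((N:ℝ) ^ (2 * m))⁻¹ * A) := by
          rw [Finset.sum_const, Finset.card_range, nsmul_eq_mul]
      _ ≤ A + ∑ j ∈ Finset.range K, ∑ y ∈ S j, W y := by
          apply add_le_add (le_refl A)
          apply Finset.sum_le_sum
          intro j hj
          exact hSsum j (Finset.mem_range.1 hj)
      _ = ∑ w ∈ Adm0 ∪ (Finset.range K).biUnion S, W w := hsum_union.symm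
      _ ≤ ∑ w : Fin n → Fin N, W w :=
          Finset.sum_le_sum_of_subset_of_nonneg (Finset.subset_univ _) (fun w _ _ => hWnn w)
      _ = partitionFn φ (SFT M) n := (partitionFn_eq φ (SFT M) n).symm
  have hfac : 0 ≤ 1 + (K:ℝ) * (Real.exp (-D0) * ((N:ℝ) ^ (2 * m))⁻¹) := by positivity
  calc (1 + (K:ℝ) * (Real.exp (-D0) * ((N:ℝ) ^ (2 * m))⁻¹)) * partitionFn φ Y' n
      ≤ (1 + (K:ℝ) * (Real.exp (-D0) * ((N:ℝ) ^ (2 * m))⁻¹)) * A :=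
        mul_le_mul_of_nonneg_left stepA hfac
    _ = A + (K:ℝ) * (Real.exp (-D0) * ((N:ℝ) ^ (2 * m))⁻¹ * A) := by ring
    _ ≤ partitionFn φ (SFT M) n := total

end Replacement

end PGap

open PGap

/-- Removing a symbol from a topologically mixing subshift of finite type creates a
strict pressure gap: `P_top(φ, Σ') < P_top(φ, Σ_A)` for a Hölder potential `φ`. -/
theorem pressure_gap
    {N : ℕ} (hN : 2 ≤ N) (M : Fin N → Fin N → Bool) (φ : (ℤ → Fin N) → ℝ)
    -- `φ` is Hölder continuous on the subshift
    (hHolder : ∃ C > (0 : ℝ), ∃ θ ∈ Set.Ioo (0 : ℝ) 1, ∀ n : ℕ,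
      ∀ x ∈ SFT M, ∀ y ∈ SFT M, (∀ i : ℤ, |i| ≤ (n : ℤ) → x i = y i) →
        |φ x - φ y| ≤ C * θ ^ n)
    -- the full subshift is topologically mixing (primitive transition matrix)
    (hmix : ∃ m : ℕ, 1 ≤ m ∧ ∀ a b : Fin N, ∃ w : ℕ → Fin N,
      w 0 = a ∧ w m = b ∧ ∀ k < m, M (w k) (w (k + 1)) = true)
    -- the subshift avoiding the first symbol is nonempty
    (hne : ({x ∈ SFT M | ∀ n : ℤ, x n ≠ (⟨0, by omega⟩ : Fin N)} : Set (ℤ → Fin N)).Nonempty)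
    -- and transitive
    (htrans : ∀ a b : Fin N, a ≠ ⟨0, by omega⟩ → b ≠ ⟨0, by omega⟩ →
      ∃ m : ℕ, 1 ≤ m ∧ ∃ w : ℕ → Fin N,
        w 0 = a ∧ w m = b ∧ (∀ k ≤ m, w k ≠ ⟨0, by omega⟩) ∧
        ∀ k < m, M (w k) (w (k + 1)) = true) :
    pressure φ {x ∈ SFT M | ∀ n : ℤ, x n ≠ (⟨0, by omega⟩ : Fin N)}
      < pressure φ (SFT M) := by
  classical
  obtain ⟨C, hC, θ, hθ, hH⟩ := hHolder
  have hθ0 : 0 < θ := hθ.1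
  have hθ1 : θ < 1 := hθ.2
  obtain ⟨m, hm, hpath⟩ := hmix
  have hN0 : 0 < N := by omega
  set e : Fin N := ⟨0, hN0⟩ with he
  set Y' : Set (ℤ → Fin N) := {x ∈ SFT M | ∀ t : ℤ, x t ≠ e} with hY'def
  show pressure φ Y' < pressure φ (SFT M)
  have hne' : Y'.Nonempty := hne
  obtain ⟨B, hB0, hB⟩ := exists_B (M := M) hN0 hC hH hm hpath
  have hY'sub : Y' ⊆ SFT M := fun x hx => hx.1
  have hY'sh : ∀ x ∈ Y', shift x ∈ Y' := fun x hx => ⟨SFT_shift hx.1, fun t => hx.2 (t + 1)⟩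
  have hSne : (SFT M).Nonempty := ⟨hne'.choose, hne'.choose_spec.1⟩
  obtain ⟨hP'le, _⟩ := pressure_facts hB0 hB hY'sub hY'sh hne'
  set D0 := 2 * (2 * (C * (1 - θ)⁻¹)) + 4 * (m : ℝ) * B with hD0
  set D1 := 2 * (2 * (C * (1 - θ)⁻¹)) + ((m : ℝ) - 1) * B with hD1
  set P := pressure φ (SFT M) with hP
  set c₀ := Real.exp (-D0) * ((N : ℝ) ^ (2 * m))⁻¹ with hc₀def
  have hNR : (0:ℝ) < (N : ℝ) := by exact_mod_cast hN0
  have hc₀ : 0 < c₀ := by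
    rw [hc₀def]
    positivity
  obtain ⟨K0, hK0⟩ := exists_nat_gt (Real.exp (((m : ℝ) - 1) * P + D1) / c₀)
  set K := K0 + 1 with hKdef
  have hK : 1 ≤ K := by omega
  have hKc : Real.exp (((m : ℝ) - 1) * P + D1) < 1 + (K : ℝ) * c₀ := by
    have h1 : Real.exp (((m : ℝ) - 1) * P + D1) < (K0 : ℝ) * c₀ :=
      (div_lt_iff₀ hc₀).1 hK0
    have h2 : ((K : ℕ) : ℝ) = (K0 : ℝ) + 1 := by rw [hKdef]; push_cast; ring
    nlinarith
  set n := K * (2 * m + 1) + 1 with hndef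
  have hn1 : n ≠ 0 := by omega
  have hrep := replacement hC hθ0 hθ1 hH hB hB0 hm hpath e K hK
  have h1 := hP'le n hn1
  have h2 := log_partitionFn_le hC hθ0 hθ1 hH hB hB0 hm hpath hSne (a := n) (by omega)
  have hZ'pos : 0 < partitionFn φ Y' n := partitionFn_pos φ hne' n
  have hZpos : 0 < partitionFn φ (SFT M) n := partitionFn_pos φ hSne n
  have hfacpos : 0 < 1 + (K : ℝ) * c₀ := by positivity
  -- logarithms
  have hlog1 : Real.log (1 + (K : ℝ) * c₀) + Real.log (partitionFn φ Y' n)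
      ≤ Real.log (partitionFn φ (SFT M) n) := by
    have := Real.log_le_log (mul_pos hfacpos hZ'pos) hrep
    rwa [Real.log_mul hfacpos.ne' hZ'pos.ne'] at this
  have hlog2 : ((m : ℝ) - 1) * P + D1 < Real.log (1 + (K : ℝ) * c₀) :=
    (Real.lt_log_iff_exp_lt hfacpos).2 hKc
  -- conclude
  have hnR : (0:ℝ) < (n : ℝ) := by
    have : 0 < n := by omega
    exact_mod_cast this
  have hmain : Real.log (partitionFn φ Y' n) < (n : ℝ) * P := by
    have hexpand : ((n : ℝ) + ((m : ℝ) - 1)) * P + D1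
        = (n : ℝ) * P + (((m : ℝ) - 1) * P + D1) := by ring
    rw [hexpand] at h2
    linarith
  calc pressure φ Y' ≤ Real.log (partitionFn φ Y' n) / n := h1
    _ < ((n : ℝ) * P) / n := (div_lt_div_iff_of_pos_right hnR).2 hmain
    _ = P := by field_simp
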